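/- arXiv:2502.11699 — 4 statements merged into one kernel-verified Lean document; each statement's English description precedes it below -/
import Mathlib

section
/- Let H and E be a separable Hilbert space and a separable Banach space respectively, G ⊆ H a finite-dimensional subspace, O an open subset of a Banach space 𝓗, and A : O → L(E, H) a C¹ map such that for every y ∈ O the closure of the range of A(y) contains G. Let (Fₙ) be an increasing sequence of finite-dimensional subspaces of E whose union is dense in E. Then for any ε > 0 and any compact set Y ⊆ O, there exists an integer n ≥ 1 and a C¹ map B : O → L(G, Fₙ) such that ‖A(y) (B(y) f) − f‖_H ≤ ε ‖f‖_H for every f ∈ G and y ∈ Y. -/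
set_option maxHeartbeats 1000000

open scoped BigOperators
open scoped InnerProductSpace
open ContinuousLinearMap


noncomputable def adjCLM (V W : Type*) [NormedAddCommGroup V] [InnerProductSpace ℝ V]
    [NormedAddCommGroup W] [InnerProductSpace ℝ W] [CompleteSpace V] [CompleteSpace W] :
    (V →L[ℝ] W) →L[ℝ] (W →L[ℝ] V) :=
  LinearMap.mkContinuous
    { toFun := ContinuousLinearMap.adjoint
      map_add' := fun a b => map_add _ a b
      map_smul' := fun c a => by
        simpa using (ContinuousLinearMap.adjoint (𝕜 := ℝ) (E := V) (F := W)).map_smulₛₗ c a }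
    1 (fun a => by simp)

@[simp] lemma adjCLM_apply {V W : Type*} [NormedAddCommGroup V] [InnerProductSpace ℝ V]
    [NormedAddCommGroup W] [InnerProductSpace ℝ W] [CompleteSpace V] [CompleteSpace W]
    (a : V →L[ℝ] W) : adjCLM V W a = ContinuousLinearMap.adjoint a := rfl

lemma coercive_isUnit {H : Type*} [NormedAddCommGroup H] [InnerProductSpace ℝ H]
    [CompleteSpace H] (S : H →L[ℝ] H) (δ : ℝ) (hδ : 0 < δ)
    (h : ∀ x, δ * ‖x‖ ^ 2 ≤ ⟪S x, x⟫_ℝ) : IsUnit S := by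
  apply ContinuousLinearMap.isUnit_of_forall_le_norm_inner_map S (c := ⟨δ, hδ.le⟩) hδ
  intro x
  calc ‖x‖ ^ 2 * ((⟨δ, hδ.le⟩ : NNReal) : ℝ) = δ * ‖x‖ ^ 2 := by push_cast; ring
  _ ≤ ⟪S x, x⟫_ℝ := h x
  _ ≤ ‖⟪S x, x⟫_ℝ‖ := le_abs_self _

lemma pseudo_inverse_key
    {H E 𝓗 ι : Type*} [Fintype ι]
    [NormedAddCommGroup H] [InnerProductSpace ℝ H] [CompleteSpace H]
    [NormedAddCommGroup E] [NormedSpace ℝ E]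
    [NormedAddCommGroup 𝓗] [NormedSpace ℝ 𝓗]
    (G : Submodule ℝ H) (O : Set 𝓗)
    (A : 𝓗 → (E →L[ℝ] H)) (hA : ContDiffOn ℝ 1 A O)
    (ιC : EuclideanSpace ℝ ι →L[ℝ] E)
    (ε : ℝ) (hε : 0 < ε) (Y : Set 𝓗)
    (happrox : ∀ y ∈ Y, ∀ f : G, ∃ x : EuclideanSpace ℝ ι,
      ‖x‖ ≤ ‖f‖ ∧ ‖A y (ιC x) - (f : H)‖ ≤ (ε / 2) * ‖f‖) :
    ∃ B : 𝓗 → (G →L[ℝ] E), ContDiffOn ℝ 1 B O ∧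
      (∀ y f, ∃ x, B y f = ιC x) ∧
      ∀ (f : G) (y : 𝓗), y ∈ Y → ‖A y (B y f) - (f : H)‖ ≤ ε * ‖f‖ := by
  classical
  set δ : ℝ := ε ^ 2 with hδdef
  have hδ : 0 < δ := by positivity
  set T : 𝓗 → (EuclideanSpace ℝ ι →L[ℝ] H) := fun y => (A y).comp ιC with hTdef
  set adT : 𝓗 → (H →L[ℝ] EuclideanSpace ℝ ι) :=
    fun y => adjCLM (EuclideanSpace ℝ ι) H (T y) with hadTdef
  set S : 𝓗 → (H →L[ℝ] H) := fun y => (T y).comp (adT y) + δ • (1 : H →L[ℝ] H) with hSdef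
  have hS_inner : ∀ y w, ⟪S y w, w⟫_ℝ = ‖adT y w‖ ^ 2 + δ * ‖w‖ ^ 2 := by
    intro y w
    simp only [hSdef, ContinuousLinearMap.add_apply, ContinuousLinearMap.coe_comp',
      Function.comp_apply, ContinuousLinearMap.smul_apply, ContinuousLinearMap.one_apply,
      inner_add_left, real_inner_smul_left, hadTdef, adjCLM_apply]
    rw [real_inner_comm, ← ContinuousLinearMap.adjoint_inner_left,
      real_inner_self_eq_norm_sq, real_inner_self_eq_norm_sq]
  have hcoer : ∀ y w, δ * ‖w‖ ^ 2 ≤ ⟪S y w, w⟫_ℝ := by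
    intro y w; rw [hS_inner]; nlinarith [sq_nonneg (‖adT y w‖)]
  have hSunit : ∀ y, IsUnit (S y) := fun y => coercive_isUnit (S y) δ hδ (hcoer y)
  set Nn : 𝓗 → (H →L[ℝ] H) := fun y => Ring.inverse (S y) with hNndef
  have hSN : ∀ y u, S y (Nn y u) = u := by
    intro y u
    have h1 : S y * Nn y = 1 := Ring.mul_inverse_cancel _ (hSunit y)
    calc S y (Nn y u) = (S y * Nn y) u := rfl
      _ = u := by rw [h1]; rfl
  have hNbound : ∀ y u, δ * ‖Nn y u‖ ≤ ‖u‖ := by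
    intro y u
    have h1 := hcoer y (Nn y u)
    rw [hSN] at h1
    have h2 : ⟪u, Nn y u⟫_ℝ ≤ ‖u‖ * ‖Nn y u‖ := real_inner_le_norm _ _
    rcases (norm_nonneg (Nn y u)).eq_or_lt with h | h
    · rw [← h]; simpa using norm_nonneg u
    · have h3 := h1.trans h2
      calc δ * ‖Nn y u‖ = δ * ‖Nn y u‖ ^ 2 / ‖Nn y u‖ := by field_simp
        _ ≤ ‖u‖ * ‖Nn y u‖ / ‖Nn y u‖ := by gcongr
        _ = ‖u‖ := by field_simp
  have hNT : ∀ y x, δ * ‖Nn y (T y x)‖ ≤ (ε / 2) * ‖x‖ := by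
    intro y x
    set w := Nn y (T y x) with hw
    set a := ‖adT y w‖ with ha
    have h1 : ⟪S y w, w⟫_ℝ = a ^ 2 + δ * ‖w‖ ^ 2 := hS_inner y w
    have h2 : S y w = T y x := hSN y (T y x)
    have h3 : ⟪S y w, w⟫_ℝ ≤ a * ‖x‖ := by
      rw [h2, real_inner_comm, ← ContinuousLinearMap.adjoint_inner_left]
      calc ⟪(ContinuousLinearMap.adjoint (T y)) w, x⟫_ℝ
          ≤ ‖(ContinuousLinearMap.adjoint (T y)) w‖ * ‖x‖ := real_inner_le_norm _ _
        _ = a * ‖x‖ := by rw [ha, hadTdef]; simp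
    have h4 : δ * ‖w‖ ^ 2 ≤ ‖x‖ ^ 2 / 4 := by nlinarith [sq_nonneg (2 * a - ‖x‖)]
    have h5 : (δ * ‖w‖) ^ 2 ≤ ((ε / 2) * ‖x‖) ^ 2 := by
      have h4' := mul_le_mul_of_nonneg_left h4 hδ.le
      rw [hδdef] at h4' ⊢; nlinarith [h4']
    have h6 := Real.sqrt_le_sqrt h5
    rwa [Real.sqrt_sq (by positivity), Real.sqrt_sq (by positivity)] at h6
  refine ⟨fun y => ιC.comp ((adT y).comp ((Nn y).comp G.subtypeL)), ?_, ?_, ?_⟩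
  · -- smoothness
    have hT : ContDiffOn ℝ 1 T O := hA.clm_comp contDiffOn_const
    have hadT : ContDiffOn ℝ 1 adT O :=
      (adjCLM (EuclideanSpace ℝ ι) H).contDiff.comp_contDiffOn hT
    have hS : ContDiffOn ℝ 1 S O := (hT.clm_comp hadT).add contDiffOn_const
    have hNn : ContDiffOn ℝ 1 Nn O := by
      intro y hy
      exact (((hSunit y).unit_spec ▸ contDiffAt_ringInverse ℝ
        (hSunit y).unit).comp_contDiffWithinAt y (hS y hy) : ContDiffWithinAt ℝ 1 (Ring.inverse ∘ S) O y)
    exact contDiffOn_const.clm_comp (hadT.clm_comp (hNn.clm_comp contDiffOn_const))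
  · intro y f
    exact ⟨(adT y) (Nn y (f : H)), rfl⟩
  · intro f y hy
    obtain ⟨x, hx, hr⟩ := happrox y hy f
    have hABf : A y (ιC.comp ((adT y).comp ((Nn y).comp G.subtypeL)) f)
        = (f : H) - δ • Nn y (f : H) := by
      have h1 : A y (ιC.comp ((adT y).comp ((Nn y).comp G.subtypeL)) f)
          = T y (adT y (Nn y (f : H))) := rfl
      have h2 : T y (adT y (Nn y (f : H))) = S y (Nn y (f : H)) - δ • Nn y (f : H) := by
        simp [hSdef, ContinuousLinearMap.add_apply, ContinuousLinearMap.smul_apply]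
      rw [h1, h2, hSN]
    rw [hABf]
    have hsplit : Nn y (f : H) = Nn y (T y x) + Nn y ((f : H) - T y x) := by
      rw [← map_add]; congr 1; abel
    have hnorm : ‖(f : H) - δ • Nn y (f : H) - (f : H)‖ = δ * ‖Nn y (f : H)‖ := by
      rw [sub_sub_cancel_left, norm_neg, norm_smul, Real.norm_eq_abs, abs_of_pos hδ]
    rw [hnorm, hsplit]
    have hrr : ‖(f : H) - T y x‖ ≤ (ε / 2) * ‖f‖ := by
      rw [norm_sub_rev]; exact hr
    calc δ * ‖Nn y (T y x) + Nn y ((f : H) - T y x)‖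
        ≤ δ * (‖Nn y (T y x)‖ + ‖Nn y ((f : H) - T y x)‖) := by
          have := norm_add_le (Nn y (T y x)) (Nn y ((f : H) - T y x))
          nlinarith
      _ = δ * ‖Nn y (T y x)‖ + δ * ‖Nn y ((f : H) - T y x)‖ := by ring
      _ ≤ (ε / 2) * ‖x‖ + ‖(f : H) - T y x‖ := add_le_add (hNT y x) (hNbound y _)
      _ ≤ (ε / 2) * ‖f‖ + (ε / 2) * ‖f‖ := by
          refine add_le_add ?_ hrr
          exact mul_le_mul_of_nonneg_left hx (by positivity)
      _ = ε * ‖f‖ := by ring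


/-- approximate right inverse (Lemma on Moore–Penrose type
pseudo-inverse). -/
theorem stmt_1 {H E 𝓗 : Type*}
    [NormedAddCommGroup H] [InnerProductSpace ℝ H] [CompleteSpace H]
    [TopologicalSpace.SeparableSpace H]
    [NormedAddCommGroup E] [NormedSpace ℝ E] [CompleteSpace E]
    [TopologicalSpace.SeparableSpace E]
    [NormedAddCommGroup 𝓗] [NormedSpace ℝ 𝓗]
    (G : Submodule ℝ H) [FiniteDimensional ℝ G]
    (O : Set 𝓗) (hO : IsOpen O)
    (A : 𝓗 → (E →L[ℝ] H)) (hA : ContDiffOn ℝ 1 A O)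
    (hrange : ∀ y ∈ O, (G : Set H) ⊆ closure (Set.range (A y)))
    (F : ℕ → Submodule ℝ E) (hmono : Monotone F)
    (hfin : ∀ n, FiniteDimensional ℝ (F n))
    (hdense : Dense (⋃ n, (F n : Set E)))
    (ε : ℝ) (hε : 0 < ε) (Y : Set 𝓗) (hY : IsCompact Y) (hYO : Y ⊆ O) :
    ∃ (n : ℕ) (B : 𝓗 → (G →L[ℝ] E)), 1 ≤ n ∧ ContDiffOn ℝ 1 B O ∧
      (∀ y f, B y f ∈ F n) ∧
      ∀ (f : G) (y : 𝓗), y ∈ Y → ‖A y (B y f) - (f : H)‖ ≤ ε * ‖f‖ := by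
  classical
  set k := Module.finrank ℝ G with hk
  set g : OrthonormalBasis (Fin k) ℝ G := stdOrthonormalBasis ℝ G with hgdef
  set η : ℝ := ε / (2 * (k + 1)) with hηdef
  have hη : 0 < η := by positivity
  -- Step 1: selection of approximate preimages near each point of Y
  have hsel : ∀ y : Y, ∃ (m : ℕ) (e : Fin k → E),
      (∀ i, e i ∈ F m) ∧ ∀ i, ‖A y (e i) - (g i : H)‖ < η := by
    intro ⟨y, hy⟩
    have hstep : ∀ i : Fin k, ∃ (m : ℕ) (e : E), e ∈ F m ∧ ‖A y e - (g i : H)‖ < η := by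
      intro i
      have hg : ((g i : H)) ∈ closure (Set.range (A y)) := hrange y (hYO hy) (g i).2
      rcases Metric.mem_closure_iff.1 hg (η / 2) (by positivity) with ⟨b, ⟨e₀, rfl⟩, hb⟩
      have hopen : IsOpen ((A y) ⁻¹' Metric.ball (A y e₀) (η / 2)) :=
        (A y).continuous.isOpen_preimage _ Metric.isOpen_ball
      obtain ⟨e, he_mem, he⟩ := hdense.exists_mem_open hopen
        ⟨e₀, by simp [Metric.mem_ball]; positivity⟩
      rcases Set.mem_iUnion.1 he_mem with ⟨mm, hm⟩
      refine ⟨mm, e, hm, ?_⟩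
      have h1 : ‖A y e - A y e₀‖ < η / 2 := by
        simpa [dist_eq_norm] using he
      have h2 : ‖A y e₀ - (g i : H)‖ < η / 2 := by
        rw [← dist_eq_norm, dist_comm]; exact hb
      calc ‖A y e - (g i : H)‖ ≤ ‖A y e - A y e₀‖ + ‖A y e₀ - (g i : H)‖ :=
            norm_sub_le_norm_sub_add_norm_sub _ _ _
        _ < η / 2 + η / 2 := by gcongr
        _ = η := by ring
    choose m e hmem hlt using hstep
    exact ⟨Finset.univ.sup m, e,
      fun i => hmono (Finset.le_sup (Finset.mem_univ i)) (hmem i), hlt⟩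
  choose m e hmem hclose using hsel
  -- Step 2: open neighborhoods and finite subcover
  set U : Y → Set 𝓗 := fun y =>
    O ∩ ⋂ i : Fin k, {z | ‖A z (e y i) - (g i : H)‖ < η} with hUdef
  have hUopen : ∀ y, IsOpen (U y) := by
    intro y
    have heq : U y = O ∩ ⋂ i : Fin k, (O ∩ {z | ‖A z (e y i) - (g i : H)‖ < η}) := by
      ext z
      simp only [hUdef, Set.mem_inter_iff, Set.mem_iInter, Set.mem_setOf_eq]
      exact ⟨fun h => ⟨h.1, fun i => ⟨h.1, h.2 i⟩⟩, fun h => ⟨h.1, fun i => (h.2 i).2⟩⟩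
    rw [heq]
    refine hO.inter (isOpen_iInter_of_finite fun i => ?_)
    have hc : ContinuousOn (fun z => ‖A z (e y i) - (g i : H)‖) O :=
      ((hA.continuousOn.clm_apply continuousOn_const).sub continuousOn_const).norm
    have := hc.isOpen_inter_preimage hO isOpen_Iio (t := Set.Iio η)
    simpa [Set.preimage, Set.mem_Iio] using this
  have hcover : Y ⊆ ⋃ y : Y, U y := by
    intro z hz
    exact Set.mem_iUnion.2 ⟨⟨z, hz⟩, hYO hz, Set.mem_iInter.2 fun i => hclose ⟨z, hz⟩ i⟩
  obtain ⟨t, ht⟩ := hY.elim_finite_subcover U hUopen hcover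
  -- Step 3: the finite family of vectors and the map ι
  set N : ℕ := max 1 (t.sup m) with hNdef
  set v : ↥t × Fin k → E := fun p => e p.1.1 p.2 with hvdef
  have hv : ∀ p, v p ∈ F N := fun p =>
    hmono (le_trans (Finset.le_sup p.1.2) (le_max_right _ _)) (hmem _ _)
  set ιlin : EuclideanSpace ℝ (↥t × Fin k) →ₗ[ℝ] E :=
    { toFun := fun x => ∑ p, x p • v p
      map_add' := by
        intro a b
        simp only [PiLp.add_apply, add_smul]
        exact Finset.sum_add_distrib
      map_smul' := by
        intro c a
        simp only [PiLp.smul_apply, smul_eq_mul, mul_smul, RingHom.id_apply]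
        exact (Finset.smul_sum).symm } with hιlindef
  set ιC : EuclideanSpace ℝ (↥t × Fin k) →L[ℝ] E :=
    LinearMap.toContinuousLinearMap ιlin with hιCdef
  have hιapp : ∀ x : EuclideanSpace ℝ (↥t × Fin k), ιC x = ∑ p, x p • v p := fun x => rfl
  have hιmem : ∀ x : EuclideanSpace ℝ (↥t × Fin k), ιC x ∈ F N := fun x =>
    Submodule.sum_mem _ fun p _ => Submodule.smul_mem _ _ (hv p)
  -- Step 4: verify the approximation hypothesis
  have happrox : ∀ y ∈ Y, ∀ f : G, ∃ x : EuclideanSpace ℝ (↥t × Fin k),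
      ‖x‖ ≤ ‖f‖ ∧ ‖A y (ιC x) - (f : H)‖ ≤ (ε / 2) * ‖f‖ := by
    intro y hy f
    obtain ⟨j, hjt, hyU⟩ := Set.mem_iUnion₂.1 (ht hy)
    have hcl : ∀ i, ‖A y (e j i) - (g i : H)‖ < η := by
      intro i
      exact Set.mem_iInter.1 hyU.2 i
    set c : EuclideanSpace ℝ (Fin k) := g.repr f with hcdef
    set x : EuclideanSpace ℝ (↥t × Fin k) :=
      WithLp.toLp 2 (fun p : ↥t × Fin k => if p.1 = (⟨j, hjt⟩ : ↥t) then c p.2 else 0) with hxdef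
    have hsum : ∑ p : ↥t × Fin k, ‖x p‖ ^ 2 = ∑ i, ‖c i‖ ^ 2 := by
      rw [Fintype.sum_prod_type]
      rw [Finset.sum_eq_single (⟨j, hjt⟩ : ↥t)]
      · simp [hxdef]
      · intro b _ hb
        simp [hxdef, hb]
      · intro h; exact absurd (Finset.mem_univ _) h
    have hxnorm : ‖x‖ = ‖f‖ := by
      rw [EuclideanSpace.norm_eq, hsum, ← EuclideanSpace.norm_eq]
      exact g.repr.norm_map f
    have hci : ∀ i, ‖c i‖ ≤ ‖f‖ := by
      intro i
      have h1 : ‖c i‖ ^ 2 ≤ ∑ i', ‖c i'‖ ^ 2 :=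
        Finset.single_le_sum (f := fun i' => ‖c i'‖ ^ 2) (fun _ _ => sq_nonneg _) (Finset.mem_univ i)
      have h2 : ∑ i', ‖c i'‖ ^ 2 = ‖f‖ ^ 2 := by
        have := (EuclideanSpace.norm_eq c).symm
        rw [g.repr.norm_map f] at this
        rw [← this, Real.sq_sqrt]
        positivity
      rw [h2] at h1
      have := Real.sqrt_le_sqrt h1
      rwa [Real.sqrt_sq (norm_nonneg _), Real.sqrt_sq (norm_nonneg _)] at this
    have hιx : A y (ιC x) = ∑ i, c i • A y (e j i) := by
      rw [hιapp, map_sum]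
      rw [Fintype.sum_prod_type]
      rw [Finset.sum_eq_single (⟨j, hjt⟩ : ↥t)]
      · simp [hxdef, hvdef]
      · intro b _ hb
        simp [hxdef, hb]
      · intro h; exact absurd (Finset.mem_univ _) h
    have hfH : (f : H) = ∑ i, c i • (g i : H) := by
      have h1 := g.sum_repr f
      calc (f : H) = ((∑ i, c i • g i : G) : H) := by rw [h1]
        _ = ∑ i, c i • (g i : H) := by push_cast; rfl
    refine ⟨x, le_of_eq hxnorm, ?_⟩
    have hdiff : A y (ιC x) - (f : H) = ∑ i, c i • (A y (e j i) - (g i : H)) := by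
      rw [hιx, hfH, ← Finset.sum_sub_distrib]
      congr 1; ext i; rw [smul_sub]
    rw [hdiff]
    calc ‖∑ i, c i • (A y (e j i) - (g i : H))‖
        ≤ ∑ i, ‖c i • (A y (e j i) - (g i : H))‖ := norm_sum_le _ _
      _ ≤ ∑ _i : Fin k, ‖f‖ * η := by
          refine Finset.sum_le_sum fun i _ => ?_
          rw [norm_smul]
          exact mul_le_mul (hci i) (hcl i).le (norm_nonneg _) (norm_nonneg _)
      _ = k * (‖f‖ * η) := by rw [Finset.sum_const]; simp [mul_comm]
      _ ≤ (ε / 2) * ‖f‖ := by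
          rw [hηdef]
          have hk1 : (0:ℝ) < 2 * ((k:ℝ) + 1) := by positivity
          rw [show (k:ℝ) * (‖f‖ * (ε / (2 * ((k:ℝ) + 1)))) =
            ‖f‖ * ((k:ℝ) * ε) / (2 * ((k:ℝ) + 1)) by ring, div_le_iff₀ hk1]
          have : (0:ℝ) ≤ ‖f‖ := norm_nonneg _
          have hkk : (0:ℝ) ≤ (k:ℝ) := Nat.cast_nonneg k
          nlinarith
  obtain ⟨B, hB1, hB2, hB3⟩ := pseudo_inverse_key G O A hA ιC ε hε Y happrox
  refine ⟨N, B, le_max_left _ _, hB1, ?_, hB3⟩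
  intro y f
  obtain ⟨x, hx⟩ := hB2 y f
  rw [hx]
  exact hιmem x
end

section
/- Let (ηₖ)_{k ∈ ℤ} be an E-valued stationary process with compactly supported marginals, and for ξ in the support 𝓔 of the law of the past (η_k)_{k≤0}, let Q_k^m(ξ;·) ∈ 𝒫(E^m) denote the conditional law of (η_{k+1},…,η_{k+m}) given the past equals ξ. Suppose there exist C, γ > 0 such that sup_{ξ ∈ 𝓔} ‖Q_k^m(ξ;·) − σ_m‖*_L ≤ C e^{−γ k} for all k, m, where σ_m is the law of (η₁,…,η_m). Then the process is feebly mixing: for all n, m ≥ 1 and all bounded continuous f : E^n → ℝ, g : E^m → ℝ, E[f(η₁,…,η_n) g(η_{k+1},…,η_{k+m})] → E[f(η₁,…,η_n)] · E[g(η₁,…,η_m)] as k → ∞. -/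
open MeasureTheory
open scoped BigOperators NNReal Topology


lemma aux_meas_comp {E Ω : Type*} [NormedAddCommGroup E] [MeasurableSpace E] [BorelSpace E]
    [MeasurableSpace Ω] {K : Set E} (hK : IsCompact K)
    {p : ℕ} (ζ : Fin p → Ω → E) (hζ : ∀ i, Measurable (ζ i)) (hζK : ∀ i ω, ζ i ω ∈ K)
    {h : (Fin p → E) → ℝ} (hh : Continuous h) :
    Measurable fun ω => h fun i => ζ i ω := by
  haveI : TopologicalSpace.SeparableSpace ↥K := hK.isSeparable.separableSpace
  haveI : SecondCountableTopology ↥K := UniformSpace.secondCountable_of_separable _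
  have hψ : Measurable fun ω (i : Fin p) => (⟨ζ i ω, hζK i ω⟩ : ↥K) :=
    measurable_pi_lambda _ fun i => (hζ i).subtype_mk
  have hcont : Continuous fun v : Fin p → ↥K => h fun i => (v i : E) :=
    hh.comp (continuous_pi fun i => continuous_subtype_val.comp (continuous_apply i))
  exact hcont.measurable.comp hψ



lemma aux_clamp (Mg v w : ℝ) (hw : |w| ≤ Mg) :
    |max (-Mg) (min Mg v) - w| ≤ |v - w| := by
  rw [abs_le] at hw
  rcases le_total Mg v with h1 | h1
  · rw [min_eq_left h1, max_eq_right (by linarith)]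
    rw [abs_of_nonneg (by linarith), abs_of_nonneg (by linarith)]
    linarith
  · rw [min_eq_right h1]
    rcases le_total (-Mg) v with h2 | h2
    · rw [max_eq_right h2]
    · rw [max_eq_left h2]
      rw [abs_of_nonpos (by linarith), abs_of_nonpos (by linarith)]
      linarith

lemma aux_meas_dist' {E : Type*} [NormedAddCommGroup E] [MeasurableSpace E] [BorelSpace E]
    {p : ℕ} [Nonempty (Fin p)] (z : Fin p → E) : Measurable fun x : Fin p → E => dist x z := by
  have hne : (Finset.univ : Finset (Fin p)).Nonempty := Finset.univ_nonempty
  have h1 : ∀ i : Fin p, Measurable fun x : Fin p → E => nndist (x i) (z i) := fun i =>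
    ((continuous_id.nndist continuous_const).measurable).comp (measurable_pi_apply i)
  have heq : (fun x : Fin p → E => dist x z) =
      fun x => ((Finset.univ.sup' hne fun i => nndist (x i) (z i) : ℝ≥0) : ℝ) := by
    funext x
    rw [dist_pi_def, ← Finset.sup'_eq_sup hne]
  rw [heq]
  refine measurable_coe_nnreal_real.comp ?_
  have := Finset.measurable_sup' hne (f := fun (i : Fin p) (x : Fin p → E) => nndist (x i) (z i))
    (fun i _ => h1 i)
  convert this using 1
  funext x
  simp [Finset.sup'_apply]

lemma aux_approx {E : Type*} [NormedAddCommGroup E] [MeasurableSpace E] [BorelSpace E]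
    {m : ℕ} {K : Set E} (hK : IsCompact K) {x₀ : E} (hx₀ : x₀ ∈ K)
    (g : (Fin m → E) → ℝ) (hg : Continuous g) {Mg : ℝ} (hMg : ∀ y, |g y| ≤ Mg)
    {ε : ℝ} (hε : 0 < ε) :
    ∃ (gL : (Fin m → E) → ℝ) (L : ℝ≥0), Measurable gL ∧ LipschitzWith L gL ∧
      (∀ y, |gL y| ≤ Mg) ∧
      ∀ y : Fin m → E, (∀ i, y i ∈ K) → |gL y - g y| ≤ ε := by
  have hMg0 : 0 ≤ Mg := le_trans (abs_nonneg _) (hMg fun _ => x₀)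
  rcases Nat.eq_zero_or_pos m with hm | hm
  · subst hm
    haveI : Subsingleton (Fin 0 → E) := ⟨fun a b => funext fun i => absurd i.2 (by omega)⟩
    refine ⟨g, 1, Subsingleton.measurable, ?_, hMg, fun y _ => by simp [hε.le]⟩
    refine LipschitzWith.of_dist_le_mul fun x y => ?_
    rw [Subsingleton.elim x y]
    simp
  haveI : Nonempty (Fin m) := ⟨⟨0, hm⟩⟩
  set S : Set (Fin m → E) := Set.univ.pi fun _ => K with hSdef
  have hS : IsCompact S := isCompact_univ_pi fun _ => hK
  have hmemS : ∀ y : Fin m → E, (∀ i, y i ∈ K) → y ∈ S := by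
    intro y hy; rw [hSdef, Set.mem_univ_pi]; exact fun i => hy i
  have hx₀S : (fun _ : Fin m => x₀) ∈ S := hmemS _ fun _ => hx₀
  -- uniform continuity on S
  have huc := hS.uniformContinuousOn_of_continuous hg.continuousOn
  rw [Metric.uniformContinuousOn_iff] at huc
  obtain ⟨δ, hδpos, hδ⟩ := huc (ε / 2) (by positivity)
  set L : ℝ≥0 := ⟨(2 * Mg + 1) / δ, by positivity⟩ with hLdef
  have hLcoe : (L : ℝ) = (2 * Mg + 1) / δ := rfl
  have hLδ : (L : ℝ) * δ = 2 * Mg + 1 := by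
    rw [hLcoe]; field_simp
  set δ' : ℝ := min δ (ε / (2 * ((L : ℝ) + 1))) with hδ'def
  have hδ'pos : 0 < δ' := lt_min hδpos (by positivity)
  have hcover : S ⊆ ⋃ z ∈ S, Metric.ball z δ' := fun x hx =>
    Set.mem_biUnion hx (Metric.mem_ball_self hδ'pos)
  obtain ⟨T, hTS, hTfin, hTcover⟩ :=
    hS.elim_finite_subcover_image (fun z _ => Metric.isOpen_ball) hcover
  have hTne : T.Nonempty := by
    obtain ⟨z, hz, -⟩ := Set.mem_iUnion₂.1 (hTcover hx₀S)
    exact ⟨z, hz⟩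
  set Tf := hTfin.toFinset with hTfdef
  have hTfne : Tf.Nonempty := by rwa [hTfdef, Set.Finite.toFinset_nonempty]
  have hTfmem : ∀ z ∈ Tf, z ∈ S := fun z hz => hTS (by rwa [hTfdef, Set.Finite.mem_toFinset] at hz)
  set gL₀ : (Fin m → E) → ℝ := fun x => Tf.inf' hTfne fun z => g z + (L : ℝ) * dist x z with hgL₀
  -- Lipschitz
  have hkey : ∀ x y, gL₀ x ≤ gL₀ y + (L : ℝ) * dist x y := by
    intro x y
    obtain ⟨z, hz, hzeq⟩ := Finset.exists_mem_eq_inf' hTfne fun z => g z + (L : ℝ) * dist y z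
    have h1 : gL₀ x ≤ g z + (L : ℝ) * dist x z := Finset.inf'_le _ hz
    have h2 : dist x z ≤ dist x y + dist y z := dist_triangle x y z
    have h3 : g z + (L : ℝ) * dist x z ≤ (g z + (L : ℝ) * dist y z) + (L : ℝ) * dist x y := by
      nlinarith [L.coe_nonneg]
    calc gL₀ x ≤ _ := h1
      _ ≤ (g z + (L : ℝ) * dist y z) + (L : ℝ) * dist x y := h3
      _ = gL₀ y + (L : ℝ) * dist x y := by rw [hgL₀, ← hzeq]
  have hlip₀ : LipschitzWith L gL₀ := by
    refine LipschitzWith.of_dist_le_mul fun x y => ?_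
    rw [Real.dist_eq, abs_le]
    constructor
    · have := hkey y x; rw [dist_comm y x] at this; linarith
    · linarith [hkey x y]
  -- Measurable
  have hmeas₀ : Measurable gL₀ := by
    rw [hgL₀]
    have : Measurable (Tf.inf' hTfne fun (z : Fin m → E) (x : Fin m → E) =>
        g z + (L : ℝ) * dist x z) :=
      Finset.inf'_induction (p := fun h : (Fin m → E) → ℝ => Measurable h) hTfne
        (fun z x => g z + (L : ℝ) * dist x z)
        (fun f₁ hf₁ f₂ hf₂ => Measurable.inf hf₁ hf₂)
        (fun z _ => measurable_const.add ((aux_meas_dist' z).const_mul _))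
    convert this using 1
    funext x
    simp [Finset.inf'_apply]
  -- closeness on S
  have hclose₀ : ∀ y ∈ S, |gL₀ y - g y| ≤ ε := by
    intro y hyS
    rw [abs_le]
    constructor
    · -- g y - ε ≤ gL₀ y
      have : ∀ z ∈ Tf, g y - ε ≤ g z + (L : ℝ) * dist y z := by
        intro z hz
        have hzS := hTfmem z hz
        rcases lt_or_ge (dist y z) δ with hd | hd
        · have := hδ y hyS z hzS hd
          rw [Real.dist_eq] at this
          have h4 : (0:ℝ) ≤ (L : ℝ) * dist y z := by positivity
          have habs := abs_lt.1 this
          linarith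
        · have h4 : (L : ℝ) * δ ≤ (L : ℝ) * dist y z :=
            mul_le_mul_of_nonneg_left hd L.coe_nonneg
          have h5 := abs_le.1 (hMg z)
          have h6 := abs_le.1 (hMg y)
          rw [hLδ] at h4
          linarith
      have := Finset.le_inf' hTfne _ this
      linarith [this]
    · -- gL₀ y ≤ g y + ε
      obtain ⟨z, hz, hball⟩ := Set.mem_iUnion₂.1 (hTcover hyS)
      have hzTf : z ∈ Tf := by rw [hTfdef, Set.Finite.mem_toFinset]; exact hz
      have hzS := hTS hz
      have hdy : dist y z < δ' := Metric.mem_ball.1 hball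
      have hd1 : dist y z < δ := lt_of_lt_of_le hdy (min_le_left _ _)
      have hg1 := hδ y hyS z hzS hd1
      rw [Real.dist_eq] at hg1
      have habs := abs_lt.1 hg1
      have h2 : (L : ℝ) * dist y z ≤ ε / 2 := by
        have hd2 : dist y z ≤ ε / (2 * ((L : ℝ) + 1)) := le_trans hdy.le (min_le_right _ _)
        have h3 : (L : ℝ) * dist y z ≤ (L : ℝ) * (ε / (2 * ((L : ℝ) + 1))) :=
          mul_le_mul_of_nonneg_left hd2 L.coe_nonneg
        have h4 : (L : ℝ) * (ε / (2 * ((L : ℝ) + 1))) ≤ ε / 2 := by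
          rw [show (L : ℝ) * (ε / (2 * ((L : ℝ) + 1))) = ((L : ℝ) * ε) / (2 * ((L : ℝ) + 1))
              from mul_div_assoc' _ _ _,
            div_le_div_iff₀ (by positivity) (by norm_num : (0:ℝ) < 2)]
          nlinarith [L.coe_nonneg, hε.le]
        linarith
      have h5 : gL₀ y ≤ g z + (L : ℝ) * dist y z := Finset.inf'_le _ hzTf
      linarith
  -- clamp
  refine ⟨fun x => max (-Mg) (min Mg (gL₀ x)), L,
    measurable_const.max (measurable_const.min hmeas₀),
    (hlip₀.const_min Mg).const_max (-Mg), ?_, ?_⟩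
  · intro y
    rw [abs_le]
    exact ⟨le_max_left _ _, max_le (by linarith) (min_le_left _ _)⟩
  · intro y hy
    exact le_trans (aux_clamp Mg (gL₀ y) (g y) (hMg y)) (hclose₀ y (hmemS y hy))

/-- if the conditional laws of the future given the past converge
to the unconditional laws exponentially fast in the dual-Lipschitz distance,
uniformly over the support of the past, then the stationary process is feebly
mixing. -/
theorem stmt_8 {E Ω : Type*} [NormedAddCommGroup E]
    [MeasurableSpace E] [BorelSpace E] [MeasurableSpace Ω]
    (μ : Measure Ω) [IsProbabilityMeasure μ]
    (η : ℤ → Ω → E) (hmeas : ∀ k, Measurable (η k))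
    (K : Set E) (hK : IsCompact K)
    (hbdd : ∀ k : ℤ, ∀ᵐ ω ∂μ, η k ω ∈ K)
    -- stationarity
    (hstat : ∀ (s : ℤ) (m : ℕ),
      Measure.map (fun ω (i : Fin m) => η (s + ((i : ℕ) : ℤ) + 1) ω) μ =
        Measure.map (fun ω (i : Fin m) => η (((i : ℕ) : ℤ) + 1) ω) μ)
    -- support of the law of the past, and conditional laws of the future
    (𝓔 : Set ({j : ℤ // j ≤ 0} → E))
    (Q : ℕ → (m : ℕ) → ({j : ℤ // j ≤ 0} → E) → Measure (Fin m → E))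
    (hQprob : ∀ k m ξ, IsProbabilityMeasure (Q k m ξ))
    (hpast : ∀ n : ℕ, ∀ᵐ ω ∂μ,
      (fun j : {j : ℤ // j ≤ 0} => η ((n : ℤ) + (j : ℤ)) ω) ∈ 𝓔)
    -- laws of (η₁,…,η_m)
    (σm : (m : ℕ) → Measure (Fin m → E))
    (hσm : ∀ m, σm m =
      Measure.map (fun ω (i : Fin m) => η (((i : ℕ) : ℤ) + 1) ω) μ)
    -- Q k m is the conditional law of (η_{n+k+1},…,η_{n+k+m}) given the past up to n
    (hcond : ∀ (n k m : ℕ) (f : (Fin n → E) → ℝ) (g : (Fin m → E) → ℝ),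
      Continuous f → Continuous g →
      ∫ ω, f (fun i => η (((i : ℕ) : ℤ) + 1) ω) *
          g (fun i => η ((n : ℤ) + (k : ℤ) + ((i : ℕ) : ℤ) + 1) ω) ∂μ =
        ∫ ω, f (fun i => η (((i : ℕ) : ℤ) + 1) ω) *
          (∫ y, g y ∂(Q k m (fun j => η ((n : ℤ) + (j : ℤ)) ω))) ∂μ)
    -- uniform exponential convergence in dual-Lipschitz distance
    (C γ : ℝ) (hC : 0 < C) (hγ : 0 < γ)
    (hconv : ∀ (k m : ℕ) (ξ : {j : ℤ // j ≤ 0} → E) (g : (Fin m → E) → ℝ),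
      ξ ∈ 𝓔 → LipschitzWith 1 g → (∀ y, |g y| ≤ 1) →
      |∫ y, g y ∂(Q k m ξ) - ∫ y, g y ∂(σm m)| ≤ C * Real.exp (-γ * k)) :
    -- feeble mixing
    ∀ (n m : ℕ) (f : (Fin n → E) → ℝ) (g : (Fin m → E) → ℝ),
      Continuous f → Continuous g →
      (∃ Mf, ∀ x, |f x| ≤ Mf) → (∃ Mg, ∀ y, |g y| ≤ Mg) →
      Filter.Tendsto
        (fun k : ℕ => ∫ ω, f (fun i => η (((i : ℕ) : ℤ) + 1) ω) *
          g (fun i => η ((k : ℤ) + ((i : ℕ) : ℤ) + 1) ω) ∂μ)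
        Filter.atTop
        (nhds ((∫ ω, f (fun i => η (((i : ℕ) : ℤ) + 1) ω) ∂μ) *
          (∫ ω, g (fun i => η (((i : ℕ) : ℤ) + 1) ω) ∂μ))) := by
  classical
  intro n m f g hf hg hMf' hMg'
  obtain ⟨Mf, hMf⟩ := hMf'
  obtain ⟨Mg, hMg⟩ := hMg'
  haveI hae : (MeasureTheory.ae μ).NeBot := by
    rw [MeasureTheory.ae_neBot]
    intro h
    have h1 : μ Set.univ = 1 := measure_univ
    rw [h] at h1; simp at h1
  obtain ⟨ω₀, hω₀⟩ := (hbdd 0).exists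
  set x₀ : E := η 0 ω₀ with hx₀def
  have hx₀ : x₀ ∈ K := hω₀
  have hMf0 : 0 ≤ Mf := le_trans (abs_nonneg _) (hMf fun _ => x₀)
  have hMg0 : 0 ≤ Mg := le_trans (abs_nonneg _) (hMg fun _ => x₀)
  -- measurable modification of η with values in K
  set η' : ℤ → Ω → E := fun k ω => if η k ω ∈ K then η k ω else x₀ with hη'def
  have hη'meas : ∀ k, Measurable (η' k) := fun k =>
    Measurable.ite ((hmeas k) hK.measurableSet) (hmeas k) measurable_const
  have hη'K : ∀ k ω, η' k ω ∈ K := by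
    intro k ω; by_cases h : η k ω ∈ K <;> simp [hη'def, h, hx₀]
  have hη'ae : ∀ k, η' k =ᵐ[μ] η k := fun k => (hbdd k).mono fun ω h => by simp [hη'def, h]
  -- a.e. strong measurability of compositions
  have haesm : ∀ (p : ℕ) (t : Fin p → ℤ) (h : (Fin p → E) → ℝ), Continuous h →
      AEStronglyMeasurable (fun ω => h fun i => η (t i) ω) μ := by
    intro p t h hh
    have h1 : Measurable fun ω => h fun i => η' (t i) ω :=
      aux_meas_comp hK (fun i => η' (t i)) (fun i => hη'meas _) (fun i ω => hη'K _ _) hh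
    refine h1.aestronglyMeasurable.congr ?_
    have h2 : ∀ᵐ ω ∂μ, ∀ i : Fin p, η' (t i) ω = η (t i) ω := ae_all_iff.2 fun i => hη'ae (t i)
    exact h2.mono fun ω hω => congrArg h (funext hω)
  have hint : ∀ (p : ℕ) (t : Fin p → ℤ) (h : (Fin p → E) → ℝ) (M : ℝ), Continuous h →
      (∀ y, |h y| ≤ M) → Integrable (fun ω => h fun i => η (t i) ω) μ := by
    intro p t h M hh hb
    refine (integrable_const M).mono' (haesm p t h hh) ?_
    exact Filter.Eventually.of_forall fun ω => by simpa [Real.norm_eq_abs] using hb _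
  have hintFG : ∀ (t2 : Fin m → ℤ) (h2 : (Fin m → E) → ℝ) (M2 : ℝ), Continuous h2 →
      (∀ y, |h2 y| ≤ M2) →
      Integrable (fun ω => f (fun i => η (((i : ℕ) : ℤ) + 1) ω) *
        h2 (fun i => η (t2 i) ω)) μ := by
    intro t2 h2 M2 hc2 hb2
    refine (integrable_const (Mf * M2)).mono'
      ((haesm n (fun i => ((i : ℕ) : ℤ) + 1) f hf).mul (haesm m t2 h2 hc2)) ?_
    refine Filter.Eventually.of_forall fun ω => ?_
    rw [Real.norm_eq_abs, abs_mul]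
    exact mul_le_mul (hMf _) (hb2 _) (abs_nonneg _) hMf0
  -- σm m is a probability measure; basic facts
  have hφm : Measurable fun ω (i : Fin m) => η (((i : ℕ) : ℤ) + 1) ω :=
    measurable_pi_lambda _ fun i => hmeas _
  haveI hσp : IsProbabilityMeasure (σm m) := by
    rw [hσm m]; exact Measure.isProbabilityMeasure_map hφm.aemeasurable
  -- the target
  rw [Metric.tendsto_atTop]
  intro ε hε
  set ε' : ℝ := ε / (4 * (Mf + 1)) with hε'def
  have hε'pos : 0 < ε' := by rw [hε'def]; positivity
  obtain ⟨gL, L, hgLmeas, hgLlip, hgLbd, hgLclose⟩ := aux_approx hK hx₀ g hg hMg hε'pos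
  set c : ℝ := ∫ y, gL y ∂(σm m) with hc
  have hgLint_σ : Integrable gL (σm m) := by
    refine (integrable_const Mg).mono' hgLmeas.aestronglyMeasurable ?_
    exact Filter.Eventually.of_forall fun y => by simpa [Real.norm_eq_abs] using hgLbd y
  have hceq : c = ∫ ω, gL (fun i => η (((i : ℕ) : ℤ) + 1) ω) ∂μ := by
    rw [hc, hσm m, integral_map hφm.aemeasurable hgLmeas.aestronglyMeasurable]
  have hcbd : |c| ≤ Mg := by
    rw [hc, ← Real.norm_eq_abs]
    calc ‖∫ y, gL y ∂(σm m)‖ ≤ Mg * ((σm m) Set.univ).toReal :=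
        norm_integral_le_of_norm_le_const (Filter.Eventually.of_forall fun y => by
          simpa [Real.norm_eq_abs] using hgLbd y)
      _ = Mg := by simp [measure_univ]
  set N : ℝ := max (max (L : ℝ) (2 * Mg)) 1 with hN
  have hNL : (L : ℝ) ≤ N := le_trans (le_max_left _ _) (le_max_left _ _)
  have hNM : 2 * Mg ≤ N := le_trans (le_max_right _ _) (le_max_left _ _)
  have hN1 : (1 : ℝ) ≤ N := le_max_right _ _
  have hNpos : (0 : ℝ) < N := lt_of_lt_of_le one_pos hN1
  have hNinv : (0 : ℝ) ≤ N⁻¹ := inv_nonneg.2 hNpos.le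
  -- key bound on conditional expectations
  have hDbound : ∀ (j : ℕ) (ξ : {jj : ℤ // jj ≤ 0} → E), ξ ∈ 𝓔 →
      |∫ y, (gL y - c) ∂(Q j m ξ)| ≤ N * (C * Real.exp (-γ * j)) := by
    intro j ξ hξ
    have hlip1 : LipschitzWith 1 fun y => N⁻¹ * (gL y - c) := by
      refine LipschitzWith.of_dist_le_mul fun x y => ?_
      rw [Real.dist_eq]
      have hd := hgLlip.dist_le_mul x y
      rw [Real.dist_eq] at hd
      have hx : N⁻¹ * (gL x - c) - N⁻¹ * (gL y - c) = N⁻¹ * (gL x - gL y) := by ring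
      rw [hx, abs_mul, abs_of_nonneg hNinv]
      have h1 : N⁻¹ * |gL x - gL y| ≤ N⁻¹ * ((L : ℝ) * dist x y) :=
        mul_le_mul_of_nonneg_left hd hNinv
      have h2 : N⁻¹ * ((L : ℝ) * dist x y) ≤ 1 * dist x y := by
        rw [← mul_assoc, one_mul]
        have h5 : N⁻¹ * (L : ℝ) ≤ 1 := by
          rw [← div_eq_inv_mul]
          exact div_le_one_of_le₀ hNL hNpos.le
        nlinarith [dist_nonneg (x := x) (y := y)]
      simpa using le_trans h1 h2
    have hbd1 : ∀ y, |N⁻¹ * (gL y - c)| ≤ 1 := by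
      intro y
      rw [abs_mul, abs_of_nonneg hNinv]
      have h1 : |gL y - c| ≤ 2 * Mg := by
        calc |gL y - c| = |gL y + -c| := by rw [sub_eq_add_neg]
          _ ≤ |gL y| + |-c| := abs_add_le _ _
          _ = |gL y| + |c| := by rw [abs_neg]
          _ ≤ Mg + Mg := add_le_add (hgLbd y) hcbd
          _ = 2 * Mg := by ring
      calc N⁻¹ * |gL y - c| ≤ N⁻¹ * N :=
          mul_le_mul_of_nonneg_left (le_trans h1 hNM) hNinv
        _ = 1 := inv_mul_cancel₀ (ne_of_gt hNpos)
    have h2 := hconv j m ξ _ hξ hlip1 hbd1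
    rw [integral_const_mul, integral_const_mul] at h2
    have h3 : ∫ y, (gL y - c) ∂(σm m) = 0 := by
      rw [integral_sub hgLint_σ (integrable_const c), integral_const]
      simp [measure_univ, hc]
    rw [h3, mul_zero, sub_zero, abs_mul, abs_of_nonneg hNinv] at h2
    have h4 : |∫ y, (gL y - c) ∂(Q j m ξ)| =
        N * (N⁻¹ * |∫ y, (gL y - c) ∂(Q j m ξ)|) := by
      rw [← mul_assoc, mul_inv_cancel₀ (ne_of_gt hNpos), one_mul]
    rw [h4]
    exact mul_le_mul_of_nonneg_left h2 hNpos.le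
  -- abbreviations for the limit values
  set A : ℝ := ∫ ω, f (fun i => η (((i : ℕ) : ℤ) + 1) ω) ∂μ with hA
  set B : ℝ := ∫ ω, g (fun i => η (((i : ℕ) : ℤ) + 1) ω) ∂μ with hB
  have hAbd : |A| ≤ Mf := by
    rw [hA, ← Real.norm_eq_abs]
    calc ‖∫ ω, f (fun i => η (((i : ℕ) : ℤ) + 1) ω) ∂μ‖ ≤ Mf * (μ Set.univ).toReal :=
        norm_integral_le_of_norm_le_const (Filter.Eventually.of_forall fun ω => by
          simpa [Real.norm_eq_abs] using hMf _)
      _ = Mf := by simp [measure_univ]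
  -- the main estimate for k ≥ n
  have key : ∀ k : ℕ, n ≤ k →
      |(∫ ω, f (fun i => η (((i : ℕ) : ℤ) + 1) ω) *
          g (fun i => η ((k : ℤ) + ((i : ℕ) : ℤ) + 1) ω) ∂μ) - A * B| ≤
        ε / 2 + Mf * (N * (C * Real.exp (-γ * ((k - n : ℕ) : ℝ)))) := by
    intro k hk
    set j : ℕ := k - n with hj
    have hkj : (k : ℤ) = (n : ℤ) + (j : ℤ) := by rw [hj]; omega
    have hidx : (fun ω => f (fun i => η (((i : ℕ) : ℤ) + 1) ω) *
        g (fun i => η ((k : ℤ) + ((i : ℕ) : ℤ) + 1) ω)) =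
        fun ω => f (fun i => η (((i : ℕ) : ℤ) + 1) ω) *
        g (fun i => η ((n : ℤ) + (j : ℤ) + ((i : ℕ) : ℤ) + 1) ω) := by
      funext ω; rw [hkj]
    rw [hidx]
    -- a.e. membership facts
    have hmemm : ∀ᵐ ω ∂μ, ∀ i : Fin m, η ((n : ℤ) + (j : ℤ) + ((i : ℕ) : ℤ) + 1) ω ∈ K :=
      ae_all_iff.2 fun i => hbdd _
    have hmem1 : ∀ᵐ ω ∂μ, ∀ i : Fin m, η (((i : ℕ) : ℤ) + 1) ω ∈ K :=
      ae_all_iff.2 fun i => hbdd _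
    -- term 1
    have e1 : |(∫ ω, f (fun i => η (((i : ℕ) : ℤ) + 1) ω) *
          g (fun i => η ((n : ℤ) + (j : ℤ) + ((i : ℕ) : ℤ) + 1) ω) ∂μ) -
        (∫ ω, f (fun i => η (((i : ℕ) : ℤ) + 1) ω) *
          gL (fun i => η ((n : ℤ) + (j : ℤ) + ((i : ℕ) : ℤ) + 1) ω) ∂μ)| ≤ Mf * ε' := by
      rw [← integral_sub (hintFG _ g Mg hg hMg) (hintFG _ gL Mg hgLlip.continuous hgLbd),
        ← Real.norm_eq_abs]
      calc ‖∫ ω, (f (fun i => η (((i : ℕ) : ℤ) + 1) ω) *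
              g (fun i => η ((n : ℤ) + (j : ℤ) + ((i : ℕ) : ℤ) + 1) ω) -
            f (fun i => η (((i : ℕ) : ℤ) + 1) ω) *
              gL (fun i => η ((n : ℤ) + (j : ℤ) + ((i : ℕ) : ℤ) + 1) ω)) ∂μ‖ ≤
          Mf * ε' * (μ Set.univ).toReal := by
            refine norm_integral_le_of_norm_le_const (hmemm.mono fun ω hω => ?_)
            rw [Real.norm_eq_abs, show
              f (fun i => η (((i : ℕ) : ℤ) + 1) ω) *
                g (fun i => η ((n : ℤ) + (j : ℤ) + ((i : ℕ) : ℤ) + 1) ω) -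
              f (fun i => η (((i : ℕ) : ℤ) + 1) ω) *
                gL (fun i => η ((n : ℤ) + (j : ℤ) + ((i : ℕ) : ℤ) + 1) ω) =
              f (fun i => η (((i : ℕ) : ℤ) + 1) ω) *
                (g (fun i => η ((n : ℤ) + (j : ℤ) + ((i : ℕ) : ℤ) + 1) ω) -
                 gL (fun i => η ((n : ℤ) + (j : ℤ) + ((i : ℕ) : ℤ) + 1) ω)) from by ring,
              abs_mul]
            refine mul_le_mul (hMf _) ?_ (abs_nonneg _) hMf0
            rw [abs_sub_comm]
            exact hgLclose _ hω
        _ = Mf * ε' := by simp [measure_univ]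
    -- term 2 : via the conditional law
    have heq := hcond n j m f (fun y => gL y - c) hf (hgLlip.continuous.sub continuous_const)
    have hLHS : ∫ ω, f (fun i => η (((i : ℕ) : ℤ) + 1) ω) *
        (gL (fun i => η ((n : ℤ) + (j : ℤ) + ((i : ℕ) : ℤ) + 1) ω) - c) ∂μ =
        (∫ ω, f (fun i => η (((i : ℕ) : ℤ) + 1) ω) *
          gL (fun i => η ((n : ℤ) + (j : ℤ) + ((i : ℕ) : ℤ) + 1) ω) ∂μ) - c * A := by
      have hsplit : (fun ω => f (fun i => η (((i : ℕ) : ℤ) + 1) ω) *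
          (gL (fun i => η ((n : ℤ) + (j : ℤ) + ((i : ℕ) : ℤ) + 1) ω) - c)) =
          fun ω => f (fun i => η (((i : ℕ) : ℤ) + 1) ω) *
            gL (fun i => η ((n : ℤ) + (j : ℤ) + ((i : ℕ) : ℤ) + 1) ω) -
          c * f (fun i => η (((i : ℕ) : ℤ) + 1) ω) := by
        funext ω; ring
      rw [hsplit, integral_sub (hintFG _ gL Mg hgLlip.continuous hgLbd)
        (((hint n (fun i => ((i : ℕ) : ℤ) + 1) f Mf hf hMf)).const_mul c),
        integral_const_mul, hA]
    have hRHS : |∫ ω, f (fun i => η (((i : ℕ) : ℤ) + 1) ω) *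
        (∫ y, (gL y - c) ∂(Q j m (fun jj => η ((n : ℤ) + (jj : ℤ)) ω))) ∂μ| ≤
        Mf * (N * (C * Real.exp (-γ * j))) := by
      rw [← Real.norm_eq_abs]
      calc ‖∫ ω, f (fun i => η (((i : ℕ) : ℤ) + 1) ω) *
            (∫ y, (gL y - c) ∂(Q j m (fun jj => η ((n : ℤ) + (jj : ℤ)) ω))) ∂μ‖ ≤
          Mf * (N * (C * Real.exp (-γ * j))) * (μ Set.univ).toReal := by
            refine norm_integral_le_of_norm_le_const ((hpast n).mono fun ω hω => ?_)
            rw [Real.norm_eq_abs, abs_mul]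
            exact mul_le_mul (hMf _) (hDbound j _ hω) (abs_nonneg _) hMf0
        _ = Mf * (N * (C * Real.exp (-γ * j))) := by simp [measure_univ]
    have e2 : |(∫ ω, f (fun i => η (((i : ℕ) : ℤ) + 1) ω) *
          gL (fun i => η ((n : ℤ) + (j : ℤ) + ((i : ℕ) : ℤ) + 1) ω) ∂μ) - c * A| ≤
        Mf * (N * (C * Real.exp (-γ * j))) := by
      rw [← hLHS]
      rw [heq] -- hopefully matches
      exact hRHS
    -- term 3
    have hcB : |c - B| ≤ ε' := by
      have hglint : Integrable (fun ω => gL (fun i => η (((i : ℕ) : ℤ) + 1) ω)) μ :=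
        hint m _ gL Mg hgLlip.continuous hgLbd
      have hgint : Integrable (fun ω => g (fun i => η (((i : ℕ) : ℤ) + 1) ω)) μ :=
        hint m _ g Mg hg hMg
      rw [hceq, hB, ← integral_sub hglint hgint, ← Real.norm_eq_abs]
      calc ‖∫ ω, (gL (fun i => η (((i : ℕ) : ℤ) + 1) ω) -
            g (fun i => η (((i : ℕ) : ℤ) + 1) ω)) ∂μ‖ ≤ ε' * (μ Set.univ).toReal := by
            refine norm_integral_le_of_norm_le_const (hmem1.mono fun ω hω => ?_)
            rw [Real.norm_eq_abs]
            exact hgLclose _ hω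
        _ = ε' := by simp [measure_univ]
    have e3 : |c * A - A * B| ≤ Mf * ε' := by
      rw [show c * A - A * B = A * (c - B) from by ring, abs_mul]
      exact mul_le_mul hAbd hcB (abs_nonneg _) hMf0
    -- combine
    have htri : |(∫ ω, f (fun i => η (((i : ℕ) : ℤ) + 1) ω) *
          g (fun i => η ((n : ℤ) + (j : ℤ) + ((i : ℕ) : ℤ) + 1) ω) ∂μ) - A * B| ≤
        Mf * ε' + Mf * (N * (C * Real.exp (-γ * j))) + Mf * ε' := by
      have t1 := abs_sub_le
        (∫ ω, f (fun i => η (((i : ℕ) : ℤ) + 1) ω) *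
          g (fun i => η ((n : ℤ) + (j : ℤ) + ((i : ℕ) : ℤ) + 1) ω) ∂μ)
        (∫ ω, f (fun i => η (((i : ℕ) : ℤ) + 1) ω) *
          gL (fun i => η ((n : ℤ) + (j : ℤ) + ((i : ℕ) : ℤ) + 1) ω) ∂μ)
        (A * B)
      have t2 := abs_sub_le
        (∫ ω, f (fun i => η (((i : ℕ) : ℤ) + 1) ω) *
          gL (fun i => η ((n : ℤ) + (j : ℤ) + ((i : ℕ) : ℤ) + 1) ω) ∂μ)
        (c * A) (A * B)
      linarith
    have hfin : Mf * ε' + Mf * ε' ≤ ε / 2 := by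
      have h1 : Mf * ε' ≤ ε / 4 := by
        rw [hε'def, show Mf * (ε / (4 * (Mf + 1))) = (Mf * ε) / (4 * (Mf + 1))
            from mul_div_assoc' _ _ _,
          div_le_div_iff₀ (by positivity) (by norm_num : (0:ℝ) < 4)]
        nlinarith
      linarith
    linarith
  -- conclude from the exponential decay
  have hexp : Filter.Tendsto (fun jj : ℕ => Mf * (N * (C * Real.exp (-γ * jj))))
      Filter.atTop (𝓝 0) := by
    have h1 : Filter.Tendsto (fun jj : ℕ => Real.exp (-γ) ^ jj) Filter.atTop (𝓝 0) :=
      tendsto_pow_atTop_nhds_zero_of_lt_one (Real.exp_nonneg _)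
        (Real.exp_lt_one_iff.2 (by linarith))
    have h2 : (fun jj : ℕ => Mf * (N * (C * Real.exp (-γ * jj)))) =
        fun jj : ℕ => (Mf * (N * C)) * Real.exp (-γ) ^ jj := by
      funext jj
      rw [show -γ * (jj : ℝ) = (jj : ℝ) * (-γ) from mul_comm _ _, Real.exp_nat_mul]
      ring
    rw [h2]
    simpa using h1.const_mul (Mf * (N * C))
  have hev : ∀ᶠ jj : ℕ in Filter.atTop, Mf * (N * (C * Real.exp (-γ * jj))) < ε / 2 :=
    hexp.eventually (gt_mem_nhds (by positivity))
  obtain ⟨k₁, hk₁⟩ := Filter.eventually_atTop.1 hev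
  refine ⟨n + k₁, fun k hk => ?_⟩
  have hk1 : n ≤ k := le_trans (Nat.le_add_right _ _) hk
  have hk2 : k₁ ≤ k - n := by omega
  rw [Real.dist_eq]
  have hkey := key k hk1
  have h3 := hk₁ (k - n) hk2
  linarith
end

section
/- Let (ηₖ) be an E-valued stationary process that is strongly feebly mixing: for each m ≥ 1, sup over ξ in the support 𝓔 of the law of the past and over continuous g : E^m → ℝ with ‖g‖_∞ ≤ 1 of |∫ g dQ_k^m(ξ;·) − E g(η₁,…,η_m)| → 0 as k → ∞. Then the process is strongly irreducible: for any n ≥ 1, any δ > 0, and any point (ξ₁,…,ξ_n) in the support of the law of (η₁,…,η_n), there is an integer s ≥ 1 such that inf_{ξ ∈ 𝓔} Q_s^n(ξ; B(ξ₁,δ) × ⋯ × B(ξ_n,δ)) > 0. -/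
open MeasureTheory

/-- strong feeble mixing implies strong irreducibility. -/
theorem stmt_9 {E : Type*} [NormedAddCommGroup E]
    [MeasurableSpace E] [BorelSpace E]
    (K : Set E) (hK : IsCompact K)
    (𝓔 : Set ({j : ℤ // j ≤ 0} → E))
    (Q : ℕ → (m : ℕ) → ({j : ℤ // j ≤ 0} → E) → Measure (Fin m → E))
    (hQprob : ∀ k m ξ, IsProbabilityMeasure (Q k m ξ))
    (hQsupp : ∀ k m ξ, Q k m ξ {y : Fin m → E | ∀ i, y i ∈ K}ᶜ = 0)
    (σm : (m : ℕ) → Measure (Fin m → E))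
    (hσprob : ∀ m, IsProbabilityMeasure (σm m))
    -- strong feeble mixing
    (hmix : ∀ m : ℕ, ∀ ε > (0 : ℝ), ∃ k₀ : ℕ, ∀ k ≥ k₀, ∀ ξ ∈ 𝓔,
      ∀ g : (Fin m → E) → ℝ, Continuous g → (∀ y, |g y| ≤ 1) →
        |∫ y, g y ∂(Q k m ξ) - ∫ y, g y ∂(σm m)| ≤ ε) :
    -- strong irreducibility
    ∀ n : ℕ, 1 ≤ n → ∀ δ > (0 : ℝ), ∀ ξvec : Fin n → E,
      (∀ r > (0 : ℝ), 0 < σm n {y | ∀ i, dist (y i) (ξvec i) < r}) →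
      ∃ s : ℕ, 1 ≤ s ∧ ∃ c > (0 : ℝ), ∀ ξ ∈ 𝓔,
        ENNReal.ofReal c ≤ Q s n ξ {y | ∀ i, dist (y i) (ξvec i) < δ} := by
  intro n hn δ hδ ξvec hsupp
  haveI := hσprob n
  haveI : NeZero n := ⟨by omega⟩
  -- distance to the center is measurable (coordinatewise, no second countability needed)
  have hDmeas : Measurable fun y : Fin n → E => dist y ξvec := by
    have h1 : (fun y : Fin n → E => dist y ξvec) =
        fun y => ((Finset.univ.sup' Finset.univ_nonempty
          fun i => nndist (y i) (ξvec i) : NNReal) : ℝ) := by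
      funext y
      rw [dist_pi_def y ξvec, Finset.sup'_eq_sup]
    have hco : ∀ i : Fin n, Measurable fun y : Fin n → E => nndist (y i) (ξvec i) := by
      intro i
      exact (continuous_id.nndist continuous_const).measurable.comp (measurable_pi_apply i)
    have h2 : (fun y : Fin n → E => (Finset.univ.sup' Finset.univ_nonempty
          fun i => nndist (y i) (ξvec i) : NNReal))
        = Finset.univ.sup' Finset.univ_nonempty
            (fun (i : Fin n) (y : Fin n → E) => nndist (y i) (ξvec i)) := by
      funext y
      rw [Finset.sup'_apply]
    rw [h1]
    exact (measurable_coe_nnreal_real).comp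
      (h2 ▸ Finset.measurable_sup' Finset.univ_nonempty (fun i _ => hco i))
  -- bump function
  set g : (Fin n → E) → ℝ := fun y => max 0 (min 1 (2 - (2 / δ) * dist y ξvec)) with hgdef
  have hgcont : Continuous g := by
    apply Continuous.max continuous_const
    exact Continuous.min continuous_const
      (continuous_const.sub (continuous_const.mul (continuous_id.dist continuous_const)))
  have hgmeas : Measurable g := by
    have hcont : Continuous fun t : ℝ => max 0 (min 1 (2 - (2 / δ) * t)) :=
      Continuous.max continuous_const (Continuous.min continuous_const
        (continuous_const.sub (continuous_const.mul continuous_id)))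
    exact hcont.measurable.comp hDmeas
  have hg0le : ∀ y, 0 ≤ g y := fun y => le_max_left _ _
  have hgle1 : ∀ y, g y ≤ 1 := fun y => max_le zero_le_one (min_le_left _ _)
  have hgabs : ∀ y, |g y| ≤ 1 := fun y => abs_le.2 ⟨by linarith [hg0le y], hgle1 y⟩
  have hg1 : ∀ y, dist y ξvec < δ / 2 → g y = 1 := by
    intro y hy
    have h2 : (2 / δ) * dist y ξvec ≤ 1 := by
      rw [div_mul_eq_mul_div, div_le_one hδ]
      nlinarith [dist_nonneg (x := y) (y := ξvec)]
    have : min 1 (2 - (2 / δ) * dist y ξvec) = 1 := min_eq_left (by linarith)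
    simp [hgdef, this]
  have hg0 : ∀ y, δ ≤ dist y ξvec → g y = 0 := by
    intro y hy
    have h2 : (2 : ℝ) ≤ (2 / δ) * dist y ξvec := by
      rw [div_mul_eq_mul_div, le_div_iff₀ hδ]; nlinarith
    have : min 1 (2 - (2 / δ) * dist y ξvec) ≤ 0 := le_trans (min_le_right _ _) (by linarith)
    exact max_eq_left this
  -- the target sets are measurable
  have hSmeas : ∀ r : ℝ, MeasurableSet {y : Fin n → E | ∀ i, dist (y i) (ξvec i) < r} := by
    intro r
    have : {y : Fin n → E | ∀ i, dist (y i) (ξvec i) < r}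
        = ⋂ i, {y : Fin n → E | dist (y i) (ξvec i) < r} := by
      ext y; simp
    rw [this]
    exact MeasurableSet.iInter fun i =>
      measurableSet_lt ((continuous_id.dist continuous_const).measurable.comp
        (measurable_pi_apply i)) measurable_const
  -- integrability of g under any probability measure
  have hint : ∀ (μ : Measure (Fin n → E)) [IsProbabilityMeasure μ], Integrable g μ := by
    intro μ hμ
    refine ⟨hgmeas.aestronglyMeasurable, ?_⟩
    apply HasFiniteIntegral.of_bounded (C := 1)
    filter_upwards with y using by simpa [Real.norm_eq_abs] using hgabs y
  set a := ∫ y, g y ∂(σm n) with hadef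
  have ha : 0 < a := by
    have hpos := hsupp (δ / 2) (by linarith)
    set B := {y : Fin n → E | ∀ i, dist (y i) (ξvec i) < δ / 2} with hBdef
    have hb : MeasurableSet B := hSmeas (δ / 2)
    have h1 : (σm n B).toReal = ∫ y in B, g y ∂(σm n) := by
      have heq : ∫ y in B, g y ∂(σm n) = ∫ _y in B, (1 : ℝ) ∂(σm n) :=
        setIntegral_congr_fun hb (fun y hy => hg1 y ((dist_pi_lt_iff (by linarith)).2 hy))
      rw [heq, setIntegral_const]; simp; rfl
    have h2 : ∫ y in B, g y ∂(σm n) ≤ a :=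
      setIntegral_le_integral (hint _) (Filter.Eventually.of_forall hg0le)
    have h3 : 0 < (σm n B).toReal :=
      ENNReal.toReal_pos hpos.ne' (measure_ne_top _ _)
    linarith
  obtain ⟨k₀, hk₀⟩ := hmix n (a / 2) (by linarith)
  refine ⟨max 1 k₀, le_max_left _ _, a / 2, by linarith, ?_⟩
  intro ξ hξ
  haveI := hQprob (max 1 k₀) n ξ
  have hb := hk₀ (max 1 k₀) (le_max_right _ _) ξ hξ g hgcont hgabs
  have hlow : a / 2 ≤ ∫ y, g y ∂(Q (max 1 k₀) n ξ) := by
    have := abs_le.1 hb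
    linarith [this.1]
  -- upper bound by the measure of the δ-set
  set S := {y : Fin n → E | ∀ i, dist (y i) (ξvec i) < δ} with hSdef
  have hS : MeasurableSet S := hSmeas δ
  have hup : ∫ y, g y ∂(Q (max 1 k₀) n ξ) ≤ ((Q (max 1 k₀) n ξ) S).toReal := by
    have hind : ∀ y, g y ≤ S.indicator (fun _ => (1 : ℝ)) y := by
      intro y
      by_cases hy : y ∈ S
      · rw [Set.indicator_of_mem hy]; exact hgle1 y
      · rw [Set.indicator_of_notMem hy]
        refine le_of_eq (hg0 y ?_)
        by_contra h
        exact hy ((dist_pi_lt_iff hδ).1 (not_le.1 h))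
    calc ∫ y, g y ∂(Q (max 1 k₀) n ξ)
        ≤ ∫ y, S.indicator (fun _ => (1 : ℝ)) y ∂(Q (max 1 k₀) n ξ) :=
          integral_mono (hint _) ((integrable_const 1).indicator hS) hind
      _ = ((Q (max 1 k₀) n ξ) S).toReal := by
          rw [integral_indicator_const _ hS]; simp; rfl
  exact ENNReal.ofReal_le_of_le_toReal (le_trans hlow hup)
end

section
/- Let H be a Hilbert space, X ⊆ H a convex compact set, K a compact subset of a Banach space E, and S : H × E → H a C¹ map with S(X × K) ⊆ X. Let G ⊆ H be a closed subspace with orthogonal projection P_G, and suppose ‖(I − P_G) D_u S(u,η)‖_{L(H)} ≤ κ < 1 for all (u,η) ∈ X × K. Let (u_k) and (u'_k) be two sequences in X with u_k = S(u_{k−1}, η_k) and u'_k = S(u'_{k−1}, η_k) for a common sequence (η_k) in K, and assume P_G u_k = P_G u'_k for all k ≥ 1. Then ‖u_k − u'_k‖_H ≤ κ^k ‖u₀ − u'₀‖_H for all k ≥ 0. -/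
/-- Foiaş–Prodi type estimate: if a determining subspace `G`
squeezes the complementary component and two trajectories with the same noise
have equal `G`-projections, then they converge together exponentially. -/
theorem stmt_17 {H E : Type*}
    [NormedAddCommGroup H] [InnerProductSpace ℝ H] [CompleteSpace H]
    [NormedAddCommGroup E] [NormedSpace ℝ E]
    (X : Set H) (hXconv : Convex ℝ X) (hXcomp : IsCompact X)
    (K : Set E) (hKcomp : IsCompact K)
    (S : H × E → H) (hS : ContDiff ℝ 1 S)
    (hinv : ∀ u ∈ X, ∀ η ∈ K, S (u, η) ∈ X)
    (G : Submodule ℝ H) [CompleteSpace G]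
    (κ : ℝ) (hκ0 : 0 ≤ κ) (hκ1 : κ < 1)
    (hdet : ∀ u ∈ X, ∀ η ∈ K, ∀ v : H,
      ‖fderiv ℝ (fun w => S (w, η)) u v -
        ((G.orthogonalProjection (fderiv ℝ (fun w => S (w, η)) u v) : G) : H)‖
        ≤ κ * ‖v‖)
    (u u' : ℕ → H) (ηs : ℕ → E)
    (huX : ∀ k, u k ∈ X) (hu'X : ∀ k, u' k ∈ X) (hηK : ∀ k, ηs k ∈ K)
    (hrec : ∀ k : ℕ, u (k + 1) = S (u k, ηs (k + 1)))
    (hrec' : ∀ k : ℕ, u' (k + 1) = S (u' k, ηs (k + 1)))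
    (hproj : ∀ k : ℕ, 1 ≤ k →
      G.orthogonalProjection (u k) = G.orthogonalProjection (u' k)) :
    ∀ k : ℕ, ‖u k - u' k‖ ≤ κ ^ k * ‖u 0 - u' 0‖ := by
  intro k
  induction k with
  | zero => simp
  | succ k ih =>
    set η := ηs (k + 1) with hηdef
    have hη : η ∈ K := hηK (k + 1)
    set Q : H →L[ℝ] H :=
      ContinuousLinearMap.id ℝ H - G.subtypeL.comp (G.orthogonalProjection) with hQ
    have hQapp : ∀ v : H, Q v = v - ((G.orthogonalProjection v : G) : H) := fun v => rfl
    have hdiffS : ∀ x : H, DifferentiableAt ℝ (fun w => S (w, η)) x := by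
      intro x
      exact ((hS.differentiable one_ne_zero) (x, η)).comp x
        (differentiableAt_id.prodMk (differentiableAt_const η))
    have hderiv : ∀ x ∈ X, HasFDerivWithinAt (fun w => Q (S (w, η)))
        (Q.comp (fderiv ℝ (fun w => S (w, η)) x)) X x := by
      intro x hx
      exact (Q.hasFDerivAt.comp x (hdiffS x).hasFDerivAt).hasFDerivWithinAt
    have hbound : ∀ x ∈ X, ‖Q.comp (fderiv ℝ (fun w => S (w, η)) x)‖ ≤ κ := by
      intro x hx
      refine ContinuousLinearMap.opNorm_le_bound _ hκ0 fun v => ?_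
      simpa [hQapp] using hdet x hx η hη v
    have hlip : ∀ x ∈ X, ∀ y ∈ X,
        ‖Q (S (y, η)) - Q (S (x, η))‖ ≤ κ * ‖y - x‖ := by
      intro x hx y hy
      exact hXconv.norm_image_sub_le_of_norm_hasFDerivWithin_le hderiv hbound hx hy
    have hp := hproj (k + 1) (Nat.le_add_left 1 k)
    have heq : u (k + 1) - u' (k + 1) = Q (S (u k, η)) - Q (S (u' k, η)) := by
      rw [← hrec k, ← hrec' k, hQapp, hQapp, hp]
      abel
    have key : ‖u (k + 1) - u' (k + 1)‖ ≤ κ * ‖u k - u' k‖ := by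
      rw [heq]
      simpa using hlip (u' k) (hu'X k) (u k) (huX k)
    calc ‖u (k + 1) - u' (k + 1)‖ ≤ κ * ‖u k - u' k‖ := key
      _ ≤ κ * (κ ^ k * ‖u 0 - u' 0‖) := mul_le_mul_of_nonneg_left ih hκ0
      _ = κ ^ (k + 1) * ‖u 0 - u' 0‖ := by ring
end
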